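/- Let d ≥ 2 and let U ⊆ ℝ^d be a bounded domain which is full (equivalently, every connected component of ℝ^d \ U is unbounded). Then the boundary ∂U is connected. -/

import Mathlib

open Set Metric Complex

noncomputable section

namespace FrontierFullAux


variable {E : Type*} [NormedAddCommGroup E] [NormedSpace ℝ E]

/-- Radial retraction of `E` onto the closed ball of radius `R` centered at `0`. -/
def ret (R : ℝ) (x : E) : E := (R / max R ‖x‖) • x

lemma ret_continuous {R : ℝ} (hR : 0 < R) : Continuous (ret R : E → E) := by
  apply Continuous.smul ?_ continuous_id
  exact continuous_const.div (continuous_const.max continuous_norm)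
    (fun x => by positivity)

lemma ret_norm_le {R : ℝ} (hR : 0 < R) (x : E) : ‖ret R x‖ ≤ R := by
  have h1 : (0:ℝ) < max R ‖x‖ := lt_max_of_lt_left hR
  rw [ret, norm_smul, Real.norm_eq_abs, _root_.abs_of_nonneg (by positivity)]
  rw [div_mul_eq_mul_div, div_le_iff₀ h1]
  have := le_max_right R ‖x‖
  nlinarith [norm_nonneg x]

lemma ret_eq_self {R : ℝ} (hR : 0 < R) {x : E} (hx : ‖x‖ ≤ R) : ret R x = x := by
  rw [ret, max_eq_left hx, div_self hR.ne', one_smul]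

lemma ret_norm_eq {R : ℝ} (hR : 0 < R) {x : E} (hx : R ≤ ‖x‖) : ‖ret R x‖ = R := by
  have hx0 : (0:ℝ) < ‖x‖ := hR.trans_le hx
  rw [ret, max_eq_right hx, norm_smul, Real.norm_eq_abs,
    _root_.abs_of_nonneg (by positivity), div_mul_cancel₀ _ hx0.ne']

set_option maxHeartbeats 1000000 in
/-- A continuous map to the unit circle, restricted to a closed ball in a proper
space, admits a continuous logarithm (argument) lift. -/
lemma exists_lift [ProperSpace E] {h : E → ℂ} (hc : Continuous h)
    (habs : ∀ x, ‖h x‖ = 1) {R : ℝ} (hR : 0 < R) :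
    ∃ g : E → ℝ, Continuous g ∧ ∀ x, ‖x‖ ≤ R → Complex.exp (g x * I) = h x := by
  have hD : IsCompact (closedBall (0:E) R) := isCompact_closedBall 0 R
  have hUC := hD.uniformContinuousOn_of_continuous hc.continuousOn
  rw [Metric.uniformContinuousOn_iff] at hUC
  obtain ⟨δ, hδ, hUC⟩ := hUC 2 (by norm_num)
  obtain ⟨n, hn⟩ := exists_nat_gt (R / δ)
  have hn0 : 0 < (n:ℝ) := lt_of_le_of_lt (by positivity) hn
  -- the subdivision points
  set p : E → ℕ → E := fun x k => ((k:ℝ)/n) • ret R x with hp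
  have hpmem : ∀ (x : E) (k : ℕ), k ≤ n → p x k ∈ closedBall (0:E) R := by
    intro x k hk
    rw [mem_closedBall, dist_zero_right, hp, norm_smul, Real.norm_eq_abs,
      _root_.abs_of_nonneg (by positivity)]
    have h1 : ((k:ℝ)/n) ≤ 1 := by
      rw [div_le_one hn0]; exact_mod_cast hk
    have h2 := ret_norm_le hR x
    nlinarith [norm_nonneg (ret R x)]
  have hpdist : ∀ (x : E) (k : ℕ), dist (p x (k+1)) (p x k) < δ := by
    intro x k
    have : p x (k+1) - p x k = (1/(n:ℝ)) • ret R x := by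
      rw [hp]; push_cast
      rw [← sub_smul]; ring_nf
    rw [dist_eq_norm, this, norm_smul, Real.norm_eq_abs,
      _root_.abs_of_nonneg (by positivity)]
    have h2 := ret_norm_le hR x
    rw [div_lt_iff₀ hδ] at hn
    calc 1/(n:ℝ) * ‖ret R x‖ ≤ 1/(n:ℝ) * R := by
          apply mul_le_mul_of_nonneg_left h2 (by positivity)
      _ < δ := by rw [div_mul_eq_mul_div, one_mul, div_lt_iff₀ hn0]; linarith
  -- the increments
  set q : E → ℕ → ℂ := fun x k => h (p x (k+1)) * (starRingEnd ℂ) (h (p x k)) with hq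
  have habsq : ∀ x k, ‖q x k‖ = 1 := by
    intro x k
    rw [hq]; simp [map_mul, habs]
  have hqne : ∀ (x : E) (k : ℕ), k < n → q x k ≠ -1 := by
    intro x k hk hcon
    have ha := hpmem x (k+1) hk
    have hb := hpmem x k hk.le
    have hdist := hUC _ ha _ hb (hpdist x k)
    have heq : h (p x (k+1)) = - h (p x k) := by
      have h2 : q x k * h (p x k) = - h (p x k) := by rw [hcon]; ring
      rw [hq] at h2
      have h3 : (starRingEnd ℂ) (h (p x k)) * (h (p x k)) = 1 := by
        rw [mul_comm, Complex.mul_conj]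
        norm_cast
        rw [Complex.normSq_eq_norm_sq, habs]; norm_num
      calc h (p x (k+1)) = h (p x (k+1)) * ((starRingEnd ℂ) (h (p x k)) * h (p x k)) := by
            rw [h3, mul_one]
        _ = - h (p x k) := by rw [← mul_assoc]; exact h2
    rw [dist_eq_norm, heq] at hdist
    have : ‖-h (p x k) - h (p x k)‖ = 2 := by
      have : -h (p x k) - h (p x k) = (-2 : ℂ) * h (p x k) := by ring
      rw [this]
      rw [norm_mul]
      have : ‖h (p x k)‖ = 1 := habs (p x k)
      rw [this]; norm_num
    linarith [this ▸ hdist]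
  have hslit : ∀ (x : E) (k : ℕ), k < n → q x k ∈ Complex.slitPlane := by
    intro x k hk
    rw [Complex.mem_slitPlane_iff]
    by_contra hcon
    push_neg at hcon
    obtain ⟨h1, h2⟩ := hcon
    have hre : q x k = ((q x k).re : ℂ) := by
      apply Complex.ext <;> simp [h2]
    have habs1 := habsq x k
    rw [hre, Complex.norm_real, Real.norm_eq_abs] at habs1
    have : (q x k).re = -1 := by
      rcases abs_cases (q x k).re with ⟨h3, h4⟩ | ⟨h3, h4⟩ <;> linarith
    exact hqne x k hk (by rw [hre, this]; norm_num)
  -- the lift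
  set g : E → ℝ := fun x => Complex.arg (h 0) +
    ∑ k ∈ Finset.range n, Complex.arg (q x k) with hg
  have hqcont : ∀ k : ℕ, Continuous fun x => q x k := by
    intro k
    apply Continuous.mul
    · exact hc.comp (continuous_const.smul (ret_continuous hR))
    · exact Complex.continuous_conj.comp (hc.comp (continuous_const.smul (ret_continuous hR)))
  have hgcont : Continuous g := by
    apply continuous_const.add
    apply continuous_finset_sum
    intro k hk
    rw [Finset.mem_range] at hk
    rw [continuous_iff_continuousAt]
    intro x
    exact ContinuousAt.comp (x := x) (Complex.continuousAt_arg (hslit x k hk))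
      ((hqcont k).continuousAt)
  refine ⟨g, hgcont, ?_⟩
  -- exp of arg recovers unit complex numbers
  have hexp_arg : ∀ z : ℂ, ‖z‖ = 1 → Complex.exp (Complex.arg z * I) = z := by
    intro z hz
    have := Complex.norm_mul_exp_arg_mul_I z
    rwa [hz, Complex.ofReal_one, one_mul] at this
  -- telescoping
  have key : ∀ (x : E) (m : ℕ), m ≤ n →
      Complex.exp ((((Complex.arg (h 0) + ∑ k ∈ Finset.range m, Complex.arg (q x k)) : ℝ) : ℂ) * I)
        = h (p x m) := by
    intro x m
    induction m with
    | zero =>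
      intro _
      have hp0 : p x 0 = 0 := by rw [hp]; simp
      rw [hp0]; simp only [Finset.range_zero, Finset.sum_empty, add_zero]
      exact hexp_arg _ (habs 0)
    | succ m ih =>
      intro hm
      have hm' : m ≤ n := by omega
      rw [Finset.sum_range_succ]
      have : ((Complex.arg (h 0) + (∑ k ∈ Finset.range m, Complex.arg (q x k)
          + Complex.arg (q x m)) : ℝ) : ℂ) * I
          = ((Complex.arg (h 0) + ∑ k ∈ Finset.range m, Complex.arg (q x k) : ℝ) : ℂ) * I
          + ((Complex.arg (q x m) : ℝ) : ℂ) * I := by push_cast; ring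
      rw [this, Complex.exp_add, ih hm', hexp_arg _ (habsq x m)]
      rw [hq]
      have h3 : (starRingEnd ℂ) (h (p x m)) * (h (p x m)) = 1 := by
        rw [mul_comm, Complex.mul_conj]
        norm_cast
        rw [Complex.normSq_eq_norm_sq, habs]; norm_num
      calc h (p x m) * (h (p x (m+1)) * (starRingEnd ℂ) (h (p x m)))
          = h (p x (m+1)) * ((starRingEnd ℂ) (h (p x m)) * h (p x m)) := by ring
        _ = h (p x (m+1)) := by rw [h3, mul_one]
  intro x hx
  have := key x n le_rfl
  have hpn : p x n = x := by
    rw [hp]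
    simp only [div_self hn0.ne', one_smul]
    exact ret_eq_self hR hx
  rw [hpn] at this
  exact this




/-- A continuous real function on a preconnected set taking values in `2πℤ` is constant. -/
lemma const_of_twopi {s : Set E} (hs : IsPreconnected s) {f : E → ℝ}
    (hf : ContinuousOn f s) (hval : ∀ x ∈ s, ∃ k : ℤ, f x = 2 * Real.pi * k) :
    ∀ x ∈ s, ∀ y ∈ s, f x = f y := by
  have pi_pos := Real.pi_pos
  -- main step, for f x < f y
  have main : ∀ x ∈ s, ∀ y ∈ s, ¬ (f x < f y) := by
    intro x hx y hy hlt
    have him : IsPreconnected (f '' s) := hs.image f hf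
    have hIcc : Icc (f x) (f y) ⊆ f '' s :=
      him.Icc_subset ⟨x, hx, rfl⟩ ⟨y, hy, rfl⟩
    obtain ⟨k₁, hk₁⟩ := hval x hx
    obtain ⟨k₂, hk₂⟩ := hval y hy
    have hk : k₁ < k₂ := by
      by_contra hcon
      push_neg at hcon
      have : (k₂ : ℝ) ≤ k₁ := by exact_mod_cast hcon
      nlinarith
    have hk' : (k₁ : ℝ) + 1 ≤ k₂ := by exact_mod_cast hk
    have hmem : f x + Real.pi ∈ Icc (f x) (f y) := by
      constructor
      · linarith
      · rw [hk₁, hk₂]; nlinarith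
    obtain ⟨z, hz, hzeq⟩ := hIcc hmem
    obtain ⟨k, hk3⟩ := hval z hz
    have : (2 * k : ℝ) = 2 * k₁ + 1 := by
      have h4 : 2 * Real.pi * k = 2 * Real.pi * k₁ + Real.pi := by
        rw [← hk3, hzeq, hk₁]
      have : Real.pi * (2 * k) = Real.pi * (2 * k₁ + 1) := by ring_nf; ring_nf at h4; linarith
      exact mul_left_cancel₀ pi_pos.ne' this
    have : (2 * k : ℤ) = 2 * k₁ + 1 := by exact_mod_cast this
    omega
  intro x hx y hy
  rcases lt_trichotomy (f x) (f y) with h | h | h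
  · exact absurd h (main x hx y hy)
  · exact h
  · exact absurd h (main y hy x hx)

/-- If `U` is bounded and every connected component of `Uᶜ` is unbounded
(in a space of dimension at least 2), then `Uᶜ` is preconnected. -/
lemma compl_preconnected (hrank : 1 < Module.rank ℝ E) {U : Set E}
    (hU : Bornology.IsBounded U)
    (hfull : ∀ x ∈ Uᶜ, ¬ Bornology.IsBounded (connectedComponentIn Uᶜ x)) :
    IsPreconnected Uᶜ := by
  obtain ⟨R, hR0, hsub⟩ := hU.subset_ball_lt 0 0
  have hR2 : (0:ℝ) ≤ 2 * R := by positivity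
  set S := sphere (0:E) (2*R) with hS
  have hScon : IsConnected S := isConnected_sphere hrank 0 hR2
  have hSU : S ⊆ Uᶜ := by
    intro z hz hzU
    have := hsub hzU
    rw [mem_ball, dist_zero_right] at this
    rw [hS, mem_sphere_iff_norm, sub_zero] at hz
    linarith
  have key : ∀ x ∈ Uᶜ, S ⊆ connectedComponentIn Uᶜ x := by
    intro x hx
    obtain ⟨p, hpC, hp⟩ : ∃ p ∈ connectedComponentIn Uᶜ x, 2*R < ‖p‖ := by
      by_contra hcon
      push_neg at hcon
      refine hfull x hx ((isBounded_closedBall (x := (0:E)) (r := 2*R)).subset ?_)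
      intro p hp
      rw [mem_closedBall, dist_zero_right]
      exact hcon p hp
    have hp0 : (0:ℝ) < ‖p‖ := by linarith
    set c := 2*R/‖p‖ with hc
    have hc0 : 0 < c := by positivity
    have hc1 : c ≤ 1 := by rw [hc, div_le_one hp0]; linarith
    set K := (fun t : ℝ => t • p) '' Icc c 1 with hK
    have hKpre : IsPreconnected K :=
      isPreconnected_Icc.image _ (Continuous.continuousOn (by continuity))
    have hKU : K ⊆ Uᶜ := by
      rintro - ⟨t, ⟨htc, ht1⟩, rfl⟩ hU'
      have h1 := hsub hU'
      rw [mem_ball, dist_zero_right, norm_smul, Real.norm_eq_abs,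
        _root_.abs_of_nonneg (hc0.le.trans htc)] at h1
      have : 2 * R ≤ t * ‖p‖ := by
        rw [hc, div_le_iff₀ hp0] at htc
        linarith
      linarith
    have hpK : p ∈ K := ⟨1, ⟨hc1, le_refl 1⟩, one_smul ℝ p⟩
    have hp'K : c • p ∈ K := ⟨c, ⟨le_rfl, hc1⟩, rfl⟩
    have hp'S : c • p ∈ S := by
      rw [hS, mem_sphere_iff_norm, sub_zero, norm_smul, Real.norm_eq_abs,
        _root_.abs_of_nonneg hc0.le, hc, div_mul_cancel₀ _ hp0.ne']
    have hCK : IsPreconnected (connectedComponentIn Uᶜ x ∪ K) :=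
      IsPreconnected.union p hpC hpK isPreconnected_connectedComponentIn hKpre
    have hCKS : IsPreconnected ((connectedComponentIn Uᶜ x ∪ K) ∪ S) :=
      IsPreconnected.union (c • p) (Or.inr hp'K) hp'S hCK hScon.isPreconnected
    have hsub' : ((connectedComponentIn Uᶜ x ∪ K) ∪ S) ⊆ Uᶜ := by
      apply union_subset (union_subset (connectedComponentIn_subset _ _) hKU) hSU
    have hfin := hCKS.subset_connectedComponentIn
      (Or.inl (Or.inl (mem_connectedComponentIn hx))) hsub'
    exact fun z hz => hfin (Or.inr hz)
  obtain ⟨z, hzS⟩ := hScon.nonempty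
  have hzU : z ∈ Uᶜ := hSU hzS
  have hall : ∀ x ∈ Uᶜ, x ∈ connectedComponentIn Uᶜ z := by
    intro x hx
    have h1 : connectedComponentIn Uᶜ x ⊆ connectedComponentIn Uᶜ z :=
      isPreconnected_connectedComponentIn.subset_connectedComponentIn
        (key x hx hzS) (connectedComponentIn_subset _ _)
    exact h1 (mem_connectedComponentIn hx)
  have heq : Uᶜ = connectedComponentIn Uᶜ z :=
    subset_antisymm hall (connectedComponentIn_subset _ _)
  rw [heq]
  exact isPreconnected_connectedComponentIn

end FrontierFullAux

open FrontierFullAux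

set_option maxHeartbeats 1000000 in
/-- If `U ⊆ ℝ^d` (`d ≥ 2`) is a bounded domain (nonempty connected open set) which
is full, i.e. every connected component of `ℝ^d \ U` is unbounded, then the
boundary `∂U` is connected. -/
theorem frontier_connected_of_full {d : ℕ} (hd : 2 ≤ d) (U : Set (EuclideanSpace ℝ (Fin d)))
    (hUopen : IsOpen U) (hUconn : IsConnected U) (hUbdd : Bornology.IsBounded U)
    (hfull : ∀ x ∈ Uᶜ, ¬ Bornology.IsBounded (connectedComponentIn Uᶜ x)) :
    IsConnected (frontier U) := by
  classical
  have pi_pos := Real.pi_pos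
  -- dimension facts
  have hrank : 1 < Module.rank ℝ (EuclideanSpace ℝ (Fin d)) := by
    have h1 : Module.finrank ℝ (EuclideanSpace ℝ (Fin d)) = d := finrank_euclideanSpace_fin
    have h2 : (Module.finrank ℝ (EuclideanSpace ℝ (Fin d)) : Cardinal) = Module.rank ℝ (EuclideanSpace ℝ (Fin d)) :=
      Module.finrank_eq_rank ℝ (EuclideanSpace ℝ (Fin d))
    rw [← h2, h1]
    exact_mod_cast by omega
  haveI : Nontrivial (EuclideanSpace ℝ (Fin d)) := by
    haveI : Nonempty (Fin d) := ⟨⟨0, by omega⟩⟩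
    exact inferInstance
  -- frontier is nonempty
  have hne : (frontier U).Nonempty := by
    rw [nonempty_frontier_iff]
    refine ⟨hUconn.nonempty, fun h => ?_⟩
    exact NormedSpace.unbounded_univ ℝ (EuclideanSpace ℝ (Fin d)) (h ▸ hUbdd)
  refine ⟨hne, ?_⟩
  by_contra hnc
  rw [IsPreconnected] at hnc
  push_neg at hnc
  obtain ⟨u, v, hu, hv, hcov, h1ne, h2ne, hdisj⟩ := hnc
  -- the two closed pieces of the frontier
  set F₁ : Set (EuclideanSpace ℝ (Fin d)) := frontier U \ v with hF₁
  set F₂ : Set (EuclideanSpace ℝ (Fin d)) := frontier U \ u with hF₂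
  have hF₁closed : IsClosed F₁ := isClosed_frontier.sdiff hv
  have hF₂closed : IsClosed F₂ := isClosed_frontier.sdiff hu
  have hunion : F₁ ∪ F₂ = frontier U := by
    apply subset_antisymm (union_subset diff_subset diff_subset)
    intro x hx
    have hx' : x ∉ u ∩ v := fun hx' => by
      have : x ∈ frontier U ∩ (u ∩ v) := ⟨hx, hx'⟩
      rw [hdisj] at this
      exact this
    rcases hcov hx with hxu | hxv
    · exact Or.inl ⟨hx, fun hxv => hx' ⟨hxu, hxv⟩⟩
    · exact Or.inr ⟨hx, fun hxu => hx' ⟨hxu, hxv⟩⟩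
  have hdisjF : ∀ x, x ∈ F₁ → x ∈ F₂ → False := by
    intro x hx1 hx2
    rcases hcov hx1.1 with hxu | hxv
    · exact hx2.2 hxu
    · exact hx1.2 hxv
  have hF₁ne : F₁.Nonempty := by
    obtain ⟨a, ha, hau⟩ := h1ne
    refine ⟨a, ha, fun hav => ?_⟩
    have : a ∈ frontier U ∩ (u ∩ v) := ⟨ha, hau, hav⟩
    rw [hdisj] at this; exact this
  have hF₂ne : F₂.Nonempty := by
    obtain ⟨a, ha, hav⟩ := h2ne
    refine ⟨a, ha, fun hau => ?_⟩
    have : a ∈ frontier U ∩ (u ∩ v) := ⟨ha, hau, hav⟩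
    rw [hdisj] at this; exact this
  -- Urysohn function
  obtain ⟨f, hf0, hf1, hf01⟩ := exists_continuous_zero_one_of_isClosed hF₁closed hF₂closed
    (disjoint_left.mpr (fun {x} hx1 hx2 => hdisjF x hx1 hx2))
  set α : EuclideanSpace ℝ (Fin d) → ℝ := fun x => Real.pi * f x with hα
  have hαcont : Continuous α := continuous_const.mul f.continuous
  -- radius
  obtain ⟨R, hR0, hRsub⟩ := hUbdd.closure.subset_ball_lt 0 0
  -- the circle-valued map
  set h : EuclideanSpace ℝ (Fin d) → ℂ := (closure U).piecewise (fun x => Complex.exp (α x * I))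
    (fun x => Complex.exp (-(α x : ℂ) * I)) with hh
  have hfront_eq : ∀ a ∈ frontier U,
      Complex.exp ((α a : ℂ) * I) = Complex.exp (-(α a : ℂ) * I) := by
    intro a ha
    rw [← hunion] at ha
    rcases ha with ha | ha
    · have : f a = 0 := hf0 ha
      have hα0 : α a = 0 := by rw [hα]; simp [this]
      rw [hα0]; norm_num
    · have : f a = 1 := hf1 ha
      have hαπ : α a = Real.pi := by rw [hα]; simp [this]
      rw [hαπ, neg_mul, Complex.exp_neg, Complex.exp_pi_mul_I]
      norm_num
  have hcont : Continuous h := by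
    rw [hh]
    apply Continuous.piecewise
    · intro a ha
      exact hfront_eq a (frontier_closure_subset ha)
    · exact (Complex.continuous_ofReal.comp hαcont).mul continuous_const |>.cexp
    · exact ((Complex.continuous_ofReal.comp hαcont).neg.mul continuous_const).cexp
  have habs : ∀ x, ‖h x‖ = 1 := by
    intro x
    rw [hh]
    by_cases hx : x ∈ closure U
    · rw [Set.piecewise_eq_of_mem _ _ _ hx]
      exact Complex.norm_exp_ofReal_mul_I _
    · rw [Set.piecewise_eq_of_notMem _ _ _ hx]
      have : -(α x : ℂ) = ((-(α x) : ℝ) : ℂ) := by push_cast; ring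
      rw [this]
      exact Complex.norm_exp_ofReal_mul_I _
  -- lift
  obtain ⟨g, hgcont, hlift⟩ := exists_lift hcont habs hR0
  -- the two connected pieces covering the closed ball
  have hA : IsPreconnected (closure U) := hUconn.isPreconnected.closure
  have hcompl : IsPreconnected Uᶜ := compl_preconnected hrank hUbdd hfull
  have hBeq : ret R '' Uᶜ = Uᶜ ∩ closedBall 0 R := by
    apply subset_antisymm
    · rintro - ⟨y, hy, rfl⟩
      refine ⟨?_, by rw [mem_closedBall, dist_zero_right]; exact ret_norm_le hR0 y⟩
      by_cases hyR : ‖y‖ ≤ R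
      · rw [ret_eq_self hR0 hyR]; exact hy
      · intro hmem
        have h2 := hRsub (subset_closure hmem)
        rw [mem_ball, dist_zero_right] at h2
        rw [ret_norm_eq hR0 (le_of_not_ge hyR)] at h2
        exact lt_irrefl R h2
    · rintro x ⟨h1, h2⟩
      exact ⟨x, h1, ret_eq_self hR0 (by rwa [mem_closedBall, dist_zero_right] at h2)⟩
  have hB : IsPreconnected (Uᶜ ∩ closedBall 0 R) := by
    rw [← hBeq]
    exact hcompl.image _ (ret_continuous hR0).continuousOn
  -- frontier is contained in both pieces
  have hfrontA : frontier U ⊆ closure U := frontier_subset_closure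
  have hfrontU : frontier U ⊆ Uᶜ := by
    rw [hUopen.frontier_eq]
    exact fun x hx => hx.2
  have hfrontB : frontier U ⊆ Uᶜ ∩ closedBall 0 R := by
    intro x hx
    exact ⟨hfrontU hx, ball_subset_closedBall (hRsub (hfrontA hx))⟩
  -- value of h on the pieces
  have hvalA : ∀ x ∈ closure U, ∃ k : ℤ, g x - α x = 2 * Real.pi * k := by
    intro x hx
    have hxR : ‖x‖ ≤ R := by
      have := hRsub hx
      rw [mem_ball, dist_zero_right] at this
      exact this.le
    have h1 : Complex.exp (g x * I) = Complex.exp ((α x : ℂ) * I) := by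
      rw [hlift x hxR, hh, Set.piecewise_eq_of_mem _ _ _ hx]
    rw [Complex.exp_eq_exp_iff_exists_int] at h1
    obtain ⟨k, hk⟩ := h1
    refine ⟨k, ?_⟩
    have h2 : ((g x : ℝ) : ℂ) * I = ((α x + 2 * Real.pi * k : ℝ) : ℂ) * I := by
      push_cast
      push_cast at hk
      linear_combination hk
    have h3 : ((g x : ℝ) : ℂ) = ((α x + 2 * Real.pi * k : ℝ) : ℂ) :=
      mul_right_cancel₀ Complex.I_ne_zero h2
    have h4 : g x = α x + 2 * Real.pi * k := by exact_mod_cast h3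
    linarith
  have hvalB : ∀ x ∈ Uᶜ ∩ closedBall 0 R, ∃ k : ℤ, g x + α x = 2 * Real.pi * k := by
    rintro x ⟨hxU, hxB⟩
    have hxR : ‖x‖ ≤ R := by rwa [mem_closedBall, dist_zero_right] at hxB
    have hhx : h x = Complex.exp (-(α x : ℂ) * I) := by
      by_cases hx : x ∈ closure U
      · have hxf : x ∈ frontier U := by
          rw [hUopen.frontier_eq]; exact ⟨hx, hxU⟩
        rw [hh, Set.piecewise_eq_of_mem _ _ _ hx]
        exact hfront_eq x hxf
      · rw [hh, Set.piecewise_eq_of_notMem _ _ _ hx]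
    have h1 : Complex.exp (g x * I) = Complex.exp (-(α x : ℂ) * I) := by
      rw [hlift x hxR, hhx]
    rw [Complex.exp_eq_exp_iff_exists_int] at h1
    obtain ⟨k, hk⟩ := h1
    refine ⟨k, ?_⟩
    have h2 : ((g x : ℝ) : ℂ) * I = ((-(α x) + 2 * Real.pi * k : ℝ) : ℂ) * I := by
      push_cast
      push_cast at hk
      linear_combination hk
    have h3 : ((g x : ℝ) : ℂ) = ((-(α x) + 2 * Real.pi * k : ℝ) : ℂ) :=
      mul_right_cancel₀ Complex.I_ne_zero h2
    have h4 : g x = -(α x) + 2 * Real.pi * k := by exact_mod_cast h3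
    linarith
  -- constancy on the pieces
  have hconstA := const_of_twopi hA ((hgcont.sub hαcont).continuousOn) hvalA
  have hconstB := const_of_twopi hB ((hgcont.add hαcont).continuousOn) hvalB
  -- derive the contradiction
  obtain ⟨x₁, hx₁⟩ := hF₁ne
  obtain ⟨x₂, hx₂⟩ := hF₂ne
  have hx₁f : x₁ ∈ frontier U := hx₁.1
  have hx₂f : x₂ ∈ frontier U := hx₂.1
  have hα₁ : α x₁ = 0 := by rw [hα]; simp [hf0 hx₁]
  have hα₂ : α x₂ = Real.pi := by rw [hα]; simp [hf1 hx₂]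
  have e1 : g x₁ - α x₁ = g x₂ - α x₂ :=
    hconstA x₁ (hfrontA hx₁f) x₂ (hfrontA hx₂f)
  have e2 : g x₁ + α x₁ = g x₂ + α x₂ :=
    hconstB x₁ (hfrontB hx₁f) x₂ (hfrontB hx₂f)
  rw [hα₁, hα₂] at e1 e2
  linarith
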